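/- Under the Setup, the four vertices v₁, v₂, v₃, v₄ are not contained in any closed half sphere: there is no w ∈ S² such that ⟨v_i, w⟩ ≥ 0 for all i ∈ {1,2,3,4}. -/

import Mathlib

open MeasureTheory Real
open scoped RealInnerProductSpace

noncomputable section

abbrev E3 := EuclideanSpace ℝ (Fin 3)

/-- The surface (area) measure `σ` on the unit sphere `S² ⊆ ℝ³`, normalized so that
`σ(S²) = 4π`. -/
def sphereArea : Measure (Metric.sphere (0 : E3) 1) := (volume : Measure E3).toSphere

/-- The cross product on `ℝ³`. -/
def cross3 (a b : E3) : E3 :=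
  (WithLp.equiv 2 (Fin 3 → ℝ)).symm
    ![a 1 * b 2 - a 2 * b 1, a 2 * b 0 - a 0 * b 2, a 0 * b 1 - a 1 * b 0]

/-- The determinant of the 3×3 matrix with rows `a`, `b`, `c`. -/
def det3 (a b c : E3) : ℝ :=
  a 0 * (b 1 * c 2 - b 2 * c 1) - a 1 * (b 0 * c 2 - b 2 * c 0) +
    a 2 * (b 0 * c 1 - b 1 * c 0)

lemma inner_cross3 (a b c : E3) : ⟪cross3 a b, c⟫ = det3 a b c := by
  simp [cross3, det3, PiLp.inner_apply, Fin.sum_univ_three, RCLike.inner_apply,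
    WithLp.equiv_symm_apply, PiLp.toLp_apply]
  ring

/-- Cramer-style lemma: a vector orthogonal to three vectors with nonzero determinant is 0. -/
lemma cramer3 (u v s x : E3) (hd : det3 u v s ≠ 0)
    (h1 : ⟪u, x⟫ = 0) (h2 : ⟪v, x⟫ = 0) (h3 : ⟪s, x⟫ = 0) : x = 0 := by
  have e1 : u 0 * x 0 + u 1 * x 1 + u 2 * x 2 = 0 := by
    simp [PiLp.inner_apply, Fin.sum_univ_three, RCLike.inner_apply] at h1; linarith
  have e2 : v 0 * x 0 + v 1 * x 1 + v 2 * x 2 = 0 := by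
    simp [PiLp.inner_apply, Fin.sum_univ_three, RCLike.inner_apply] at h2; linarith
  have e3 : s 0 * x 0 + s 1 * x 1 + s 2 * x 2 = 0 := by
    simp [PiLp.inner_apply, Fin.sum_univ_three, RCLike.inner_apply] at h3; linarith
  have hx0 : det3 u v s * x 0 = 0 := by
    simp only [det3]; linear_combination (v 1 * s 2 - v 2 * s 1) * e1
      - (u 1 * s 2 - u 2 * s 1) * e2 + (u 1 * v 2 - u 2 * v 1) * e3
  have hx1 : det3 u v s * x 1 = 0 := by
    simp only [det3]; linear_combination (-(v 0 * s 2 - v 2 * s 0)) * e1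
      + (u 0 * s 2 - u 2 * s 0) * e2 - (u 0 * v 2 - u 2 * v 0) * e3
  have hx2 : det3 u v s * x 2 = 0 := by
    simp only [det3]; linear_combination (v 0 * s 1 - v 1 * s 0) * e1
      - (u 0 * s 1 - u 1 * s 0) * e2 + (u 0 * v 1 - u 1 * v 0) * e3
  have z0 : x 0 = 0 := by
    rcases mul_eq_zero.1 hx0 with h | h; exact absurd h hd; exact h
  have z1 : x 1 = 0 := by
    rcases mul_eq_zero.1 hx1 with h | h; exact absurd h hd; exact h
  have z2 : x 2 = 0 := by
    rcases mul_eq_zero.1 hx2 with h | h; exact absurd h hd; exact h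
  ext i
  fin_cases i
  · simpa using z0
  · simpa using z1
  · simpa using z2

set_option maxHeartbeats 1600000 in
/-- Proposition (no closed half sphere): under the setup, the four vertices
`v₁, v₂, v₃, v₄` are not contained in any closed half sphere. -/
theorem vertices_not_in_closed_halfsphere
    (z v : Fin 4 → E3)
    (hz_inj : Function.Injective z)
    (hz_ne : ∀ i, z i ≠ 0)
    (hz_span : Submodule.span ℝ (Set.range z) = ⊤)
    (hz_sum : ∑ i : Fin 4, z i = 0)
    (T : Fin 4 → Set (Metric.sphere (0 : E3) 1))
    (hT : ∀ i, T i = {x | ⟪(x : E3), z i⟫ =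
      Finset.univ.sup' Finset.univ_nonempty fun j : Fin 4 => ⟪(x : E3), z j⟫})
    (hzT : ∀ i, z i = ∫ x in T i, (x : E3) ∂sphereArea)
    (hv_norm : ∀ ℓ, ‖v ℓ‖ = 1)
    (hv_eq : ∀ ℓ i j : Fin 4, i ≠ ℓ → j ≠ ℓ → ⟪z i, v ℓ⟫ = ⟪z j, v ℓ⟫)
    (hv_lt : ∀ ℓ i : Fin 4, i ≠ ℓ → ⟪z ℓ, v ℓ⟫ < ⟪z i, v ℓ⟫)
    (hv_uniq : ∀ (ℓ : Fin 4) (w : E3), ‖w‖ = 1 →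
      (∀ i j : Fin 4, i ≠ ℓ → j ≠ ℓ → ⟪z i, w⟫ = ⟪z j, w⟫) →
      (∀ i : Fin 4, i ≠ ℓ → ⟪z ℓ, w⟫ < ⟪z i, w⟫) → w = v ℓ)
    (θ : Fin 4 → Fin 4 → ℝ)
    (hθ : ∀ i j, θ i j = Real.arccos ⟪v i, v j⟫)
    :
    ¬ ∃ w : E3, ‖w‖ = 1 ∧ ∀ i : Fin 4, 0 ≤ ⟪v i, w⟫ := by
  rintro ⟨w, hw1, hw2⟩
  have hsum4 : z 0 + z 1 + z 2 + z 3 = 0 := by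
    have := hz_sum; rwa [Fin.sum_univ_four] at this
  set p : E3 := z 1 - z 0 with hp
  set q : E3 := z 2 - z 0 with hq
  set r : E3 := z 3 - z 0 with hr
  -- span of p, q, r is everything
  have hpqr_top : ⊤ ≤ Submodule.span ℝ (Set.range ![p, q, r]) := by
    rw [← hz_span]
    apply Submodule.span_le.2
    rintro x ⟨i, rfl⟩
    set S := Submodule.span ℝ (Set.range ![p, q, r]) with hS
    have hpS : p ∈ S := Submodule.subset_span ⟨0, rfl⟩
    have hqS : q ∈ S := Submodule.subset_span ⟨1, rfl⟩
    have hrS : r ∈ S := Submodule.subset_span ⟨2, rfl⟩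
    have hz0S : z 0 ∈ S := by
      have hz0 : z 0 = -((4:ℝ)⁻¹) • (p + q + r) := by
        rw [hp, hq, hr]
        linear_combination (norm := module) ((4:ℝ)⁻¹ : ℝ) • hsum4
      rw [hz0]
      exact S.smul_mem _ (S.add_mem (S.add_mem hpS hqS) hrS)
    have hz1S : z 1 ∈ S := by
      have h : z 1 = z 0 + p := by rw [hp]; abel
      rw [h]; exact S.add_mem hz0S hpS
    have hz2S : z 2 ∈ S := by
      have h : z 2 = z 0 + q := by rw [hq]; abel
      rw [h]; exact S.add_mem hz0S hqS
    have hz3S : z 3 ∈ S := by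
      have h : z 3 = z 0 + r := by rw [hr]; abel
      rw [h]; exact S.add_mem hz0S hrS
    fin_cases i
    · exact hz0S
    · exact hz1S
    · exact hz2S
    · exact hz3S
  have hli : LinearIndependent ℝ ![p, q, r] :=
    linearIndependent_of_top_le_span_of_card_eq_finrank hpqr_top
      (by simp [finrank_euclideanSpace_fin])
  -- the determinant D is nonzero
  set D : ℝ := det3 p q r with hD
  have hD0 : D ≠ 0 := by
    intro h0
    set M : Matrix (Fin 3) (Fin 3) ℝ :=
      Matrix.of ![WithLp.equiv 2 (Fin 3 → ℝ) p, WithLp.equiv 2 (Fin 3 → ℝ) q,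
        WithLp.equiv 2 (Fin 3 → ℝ) r] with hM
    have hdet : M.det = 0 := by
      have hMd : M.det = D := by
        rw [Matrix.det_fin_three, hD]
        simp only [hM, det3, WithLp.equiv_apply, Matrix.of_apply,
          Matrix.cons_val_zero, Matrix.cons_val_one, Matrix.head_cons,
          Matrix.cons_val_two, Matrix.tail_cons]
        ring
      rw [hMd]; exact h0
    obtain ⟨g, hg0, hgM⟩ := Matrix.exists_vecMul_eq_zero_iff.2 hdet
    have hrel : ∑ i : Fin 3, g i • ![p, q, r] i = 0 := by
      rw [Fin.sum_univ_three]
      ext j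
      have hj := congrFun hgM j
      simp [hM, Matrix.vecMul, dotProduct, Fin.sum_univ_three,
        WithLp.equiv_apply] at hj
      simpa [Matrix.cons_val_zero, Matrix.cons_val_one, Matrix.head_cons, Matrix.vecHead, Matrix.vecTail, dotProduct, Fin.sum_univ_three, add_assoc] using hj
    have := Fintype.linearIndependent_iff.1 hli g hrel
    exact hg0 (funext this)
  set ε : ℝ := if 0 < D then 1 else -1 with hε
  have hεcases : ε = 1 ∨ ε = -1 := by
    rw [hε]; split <;> simp
  have hε2 : ε * ε = 1 := by rcases hεcases with h | h <;> rw [h] <;> norm_num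
  have hεD : 0 < ε * D := by
    rw [hε]; split
    · simpa using ‹0 < D›
    · have : D < 0 := lt_of_le_of_ne (not_lt.1 ‹¬ 0 < D›) hD0
      nlinarith
  -- the four (unnormalized) outward/inward face normals
  set N : Fin 4 → E3 := ![cross3 (z 2 - z 1) (z 3 - z 1), cross3 (z 3 - z 0) (z 2 - z 0),
    cross3 (z 1 - z 0) (z 3 - z 0), cross3 (z 2 - z 0) (z 1 - z 0)] with hN
  have hNsum : N 0 + N 1 + N 2 + N 3 = 0 := by
    rw [hN]
    ext j
    fin_cases j <;>
      simp [cross3, WithLp.equiv_symm_apply, PiLp.toLp_apply] <;> ring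
  -- key inner product computation
  have key12 : ∀ ℓ i : Fin 4, i ≠ ℓ → ⟪z ℓ - z i, N ℓ⟫ = -D := by
    intro ℓ i hne
    rw [hD, hp, hq, hr]
    fin_cases ℓ <;> fin_cases i <;>
      first
        | (exact absurd rfl hne)
        | (simp [hN, cross3, det3, PiLp.inner_apply, Fin.sum_univ_three,
             RCLike.inner_apply, WithLp.equiv_symm_apply, PiLp.toLp_apply]
           try ring)
  have hNne : ∀ ℓ, N ℓ ≠ 0 := by
    intro ℓ h0
    have hm : ∃ m, m ≠ ℓ := by
      rcases eq_or_ne ℓ 0 with h | h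
      · exact ⟨1, by rw [h]; decide⟩
      · exact ⟨0, Ne.symm h⟩
    obtain ⟨m, hm⟩ := hm
    have := key12 ℓ m hm
    rw [h0, inner_zero_right] at this
    exact hD0 (by linarith)
  have hNpos : ∀ ℓ, 0 < ‖N ℓ‖ := fun ℓ => norm_pos_iff.2 (hNne ℓ)
  -- identify v ℓ
  have key : ∀ ℓ, v ℓ = (ε / ‖N ℓ‖) • N ℓ := by
    intro ℓ
    refine (hv_uniq ℓ _ ?_ ?_ ?_).symm
    · rw [norm_smul]
      have h1 : |ε| = 1 := by rcases hεcases with h | h <;> rw [h] <;> norm_num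
      rw [Real.norm_eq_abs, abs_div, h1, abs_of_pos (hNpos ℓ), one_div,
        inv_mul_cancel₀ (hNpos ℓ).ne']
    · intro i j hi hj
      have h1 := key12 ℓ i hi
      have h2 := key12 ℓ j hj
      rw [inner_sub_left] at h1 h2
      have h3 : ⟪z i, N ℓ⟫ = ⟪z j, N ℓ⟫ := by linarith
      rw [real_inner_smul_right, real_inner_smul_right, h3]
    · intro i hi
      have h1 := key12 ℓ i hi
      rw [inner_sub_left] at h1
      rw [real_inner_smul_right, real_inner_smul_right]
      have hpos := hNpos ℓ
      have : ε / ‖N ℓ‖ * (⟪z ℓ, N ℓ⟫ - ⟪z i, N ℓ⟫) < 0 := by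
        rw [h1]
        have : ε / ‖N ℓ‖ * -D = -(ε * D) / ‖N ℓ‖ := by ring
        rw [this]
        exact div_neg_of_neg_of_pos (by linarith) hpos
      rw [mul_sub] at this
      linarith
  have hNv : ∀ ℓ, N ℓ = (ε * ‖N ℓ‖) • v ℓ := by
    intro ℓ
    rw [key ℓ, smul_smul]
    have hpos := hNpos ℓ
    have : ε * ‖N ℓ‖ * (ε / ‖N ℓ‖) = 1 := by
      field_simp
      linear_combination hε2
    rw [this, one_smul]
  -- inner products with w all vanish
  have hsum0 : ⟪N 0, w⟫ + ⟪N 1, w⟫ + ⟪N 2, w⟫ + ⟪N 3, w⟫ = 0 := by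
    have := congrArg (fun x : E3 => (⟪x, w⟫ : ℝ)) hNsum
    simpa [inner_add_left] using this
  have hsgn : ∀ ℓ, ⟪N ℓ, w⟫ = ε * (‖N ℓ‖ * ⟪v ℓ, w⟫) := by
    intro ℓ
    conv_lhs => rw [hNv ℓ]
    rw [real_inner_smul_left]
    ring
  have hvw : ∀ ℓ, ⟪v ℓ, w⟫ = 0 := by
    have h0 := hsum0
    rw [hsgn 0, hsgn 1, hsgn 2, hsgn 3] at h0
    have hnn : ∀ ℓ, 0 ≤ ‖N ℓ‖ * ⟪v ℓ, w⟫ :=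
      fun ℓ => mul_nonneg (norm_nonneg _) (hw2 ℓ)
    have hS : ‖N 0‖ * ⟪v 0, w⟫ + ‖N 1‖ * ⟪v 1, w⟫ + ‖N 2‖ * ⟪v 2, w⟫
        + ‖N 3‖ * ⟪v 3, w⟫ = 0 := by
      rcases hεcases with h | h <;> rw [h] at h0 <;> linarith
    have e0 : ‖N 0‖ * ⟪v 0, w⟫ = 0 := by linarith [hnn 0, hnn 1, hnn 2, hnn 3]
    have e1 : ‖N 1‖ * ⟪v 1, w⟫ = 0 := by linarith [hnn 0, hnn 1, hnn 2, hnn 3]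
    have e2 : ‖N 2‖ * ⟪v 2, w⟫ = 0 := by linarith [hnn 0, hnn 1, hnn 2, hnn 3]
    have e3 : ‖N 3‖ * ⟪v 3, w⟫ = 0 := by linarith [hnn 0, hnn 1, hnn 2, hnn 3]
    have hterm : ∀ ℓ, ‖N ℓ‖ * ⟪v ℓ, w⟫ = 0 := by
      intro ℓ
      fin_cases ℓ
      · exact e0
      · exact e1
      · exact e2
      · exact e3
    intro ℓ
    have := hterm ℓ
    rcases mul_eq_zero.1 this with h | h
    · exact absurd h (ne_of_gt (hNpos ℓ))
    · exact h
  have hNw : ∀ ℓ, ⟪N ℓ, w⟫ = 0 := by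
    intro ℓ; rw [hsgn ℓ, hvw ℓ]; ring
  -- determinant of three of the normals is nonzero
  have hdetN : det3 (N 1) (N 2) (N 3) = -(D * D) := by
    rw [hN, hD, hp, hq, hr]
    simp only [Matrix.cons_val_one, Matrix.head_cons, Matrix.cons_val_two,
      Matrix.tail_cons, Matrix.cons_val_three]
    simp only [det3, cross3, WithLp.equiv_symm_apply, PiLp.toLp_apply, PiLp.sub_apply,
      Matrix.cons_val_zero, Matrix.cons_val_one, Matrix.head_cons,
      Matrix.cons_val_two, Matrix.tail_cons]
    ring
  have hdetN0 : det3 (N 1) (N 2) (N 3) ≠ 0 := by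
    rw [hdetN]
    intro h
    exact hD0 (by nlinarith)
  have hw0 : w = 0 := cramer3 (N 1) (N 2) (N 3) w hdetN0 (hNw 1) (hNw 2) (hNw 3)
  rw [hw0, norm_zero] at hw1
  norm_num at hw1
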